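/- Let Γ be a subgroup of ℂˣ with the accumulation property. Let ψ : ℂ → ℂ be holomorphic on ℂ∖{0} with ψ(z) ≠ 0 for every z ≠ 0, and let σ : Γ → Γ be a group homomorphism such that ψ(γ·z) = σ(γ)·ψ(z) for every γ ∈ Γ and every z ≠ 0. Then there exist a ∈ ℂ with a ≠ 0 and n ∈ ℤ such that ψ(z) = a·z^n for all z ≠ 0 (integer power) and σ(γ) = γ^n for all γ ∈ Γ. -/

import Mathlib

/-- A subgroup of `ℂˣ` has the accumulation property if it contains an element of modulus
`≠ 1`, or a sequence of elements `≠ 1` converging to `1` in `ℂ`. -/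
def HasAccumulation (Γ : Subgroup ℂˣ) : Prop :=
  (∃ q : ℂˣ, q ∈ Γ ∧ ‖(q : ℂ)‖ ≠ 1) ∨
    ∃ γ : ℕ → ℂˣ, (∀ n, γ n ∈ Γ) ∧ (∀ n, γ n ≠ 1) ∧
      Filter.Tendsto (fun n => ((γ n : ℂˣ) : ℂ)) Filter.atTop (nhds 1)

set_option maxHeartbeats 1000000 in
open Filter in
/-- semi-equivariant holomorphic nonvanishing maps on `ℂ∖{0}` with respect to
a subgroup with accumulation are monomial, and the induced endomorphism is a power map. -/
theorem stmt_10 (Γ : Subgroup ℂˣ) (hacc : HasAccumulation Γ)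
    (ψ : ℂ → ℂ)
    (hψ : ∀ z : ℂ, z ≠ 0 → DifferentiableAt ℂ ψ z)
    (hψ0 : ∀ z : ℂ, z ≠ 0 → ψ z ≠ 0)
    (σ : Γ →* Γ)
    (heq : ∀ γ : Γ, ∀ z : ℂ, z ≠ 0 →
      ψ (((γ : ℂˣ) : ℂ) * z) = (((σ γ : Γ) : ℂˣ) : ℂ) * ψ z) :
    ∃ a : ℂ, a ≠ 0 ∧ ∃ n : ℤ,
      (∀ z : ℂ, z ≠ 0 → ψ z = a * z ^ n) ∧
      ∀ γ : Γ, ((σ γ : Γ) : ℂˣ) = ((γ : ℂˣ)) ^ n := by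
  have hexp : ∀ w : ℂ, Complex.exp w ≠ 0 := Complex.exp_ne_zero
  have hU : IsOpen ({(0:ℂ)}ᶜ) := isOpen_compl_singleton
  -- ψ is analytic on ℂ∖{0}, hence its derivative is differentiable there
  have hψO : DifferentiableOn ℂ ψ ({(0:ℂ)}ᶜ) :=
    fun z hz => (hψ z hz).differentiableWithinAt
  have hψa : AnalyticOnNhd ℂ ψ ({(0:ℂ)}ᶜ) := hψO.analyticOnNhd hU
  have hd : ∀ z : ℂ, z ≠ 0 → DifferentiableAt ℂ (deriv ψ) z :=
    fun z hz => (hψa.deriv z hz).differentiableAt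
  -- differentiate the functional equation
  have hder : ∀ γ : Γ, ∀ z : ℂ, z ≠ 0 →
      deriv ψ (((γ : ℂˣ) : ℂ) * z) * ((γ : ℂˣ) : ℂ)
        = (((σ γ : Γ) : ℂˣ) : ℂ) * deriv ψ z := by
    intro γ z hz
    have hγ : ((γ : ℂˣ) : ℂ) ≠ 0 := (γ : ℂˣ).ne_zero
    have h1 : HasDerivAt (fun w => ψ (((γ : ℂˣ) : ℂ) * w))
        (deriv ψ (((γ : ℂˣ) : ℂ) * z) * ((γ : ℂˣ) : ℂ)) z := by
      have hin : HasDerivAt (fun w : ℂ => ((γ : ℂˣ) : ℂ) * w) (((γ : ℂˣ) : ℂ)) z := by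
        simpa using (hasDerivAt_id z).const_mul (((γ : ℂˣ) : ℂ))
      exact ((hψ _ (mul_ne_zero hγ hz)).hasDerivAt).comp z hin
    have h2 : HasDerivAt (fun w => (((σ γ : Γ) : ℂˣ) : ℂ) * ψ w)
        ((((σ γ : Γ) : ℂˣ) : ℂ) * deriv ψ z) z := ((hψ z hz).hasDerivAt).const_mul _
    have hev : (fun w => (((σ γ : Γ) : ℂˣ) : ℂ) * ψ w)
        =ᶠ[nhds z] (fun w => ψ (((γ : ℂˣ) : ℂ) * w)) := by
      filter_upwards [hU.mem_nhds hz] with w hw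
      exact (heq γ w hw).symm
    exact (h1.congr_of_eventuallyEq hev).unique h2
  -- the logarithmic derivative pulled back by exp
  let h : ℂ → ℂ := fun w => deriv ψ (Complex.exp w) * Complex.exp w / ψ (Complex.exp w)
  have hh_def : ∀ w, h w = deriv ψ (Complex.exp w) * Complex.exp w / ψ (Complex.exp w) :=
    fun _ => rfl
  have hhdiff : Differentiable ℂ h := by
    intro w
    exact (((hd _ (hexp w)).comp w (Complex.differentiable_exp w)).mul
      (Complex.differentiable_exp w)).div
      ((hψ _ (hexp w)).comp w (Complex.differentiable_exp w)) (hψ0 _ (hexp w))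
  -- h is periodic with period log γ for every γ ∈ Γ
  have hper : ∀ γ : ℂˣ, γ ∈ Γ → ∀ w : ℂ, h (w + Complex.log (γ : ℂ)) = h w := by
    intro γ hγΓ w
    have hγ : (γ : ℂ) ≠ 0 := γ.ne_zero
    have hew := hexp w
    have he : Complex.exp (w + Complex.log (γ : ℂ)) = (γ : ℂ) * Complex.exp w := by
      rw [Complex.exp_add, Complex.exp_log hγ]; ring
    set γ' : Γ := ⟨γ, hγΓ⟩ with hγ'
    have hσ : (((σ γ' : Γ) : ℂˣ) : ℂ) ≠ 0 := ((σ γ' : Γ) : ℂˣ).ne_zero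
    have e1 := hder γ' (Complex.exp w) hew
    have e2 := heq γ' (Complex.exp w) hew
    have hψe := hψ0 _ hew
    rw [hh_def, hh_def, he, e2, div_eq_div_iff (mul_ne_zero hσ hψe) hψe]
    linear_combination (Complex.exp w * ψ (Complex.exp w)) * e1
  -- h is also 2πi-periodic
  have P2 : Function.Periodic h (2 * Real.pi * Complex.I) := by
    intro w
    rw [hh_def, hh_def, Complex.exp_add, Complex.exp_two_pi_mul_I, mul_one]
  -- h is constant
  have hconst : ∀ w, h w = h 0 := by
    rcases hacc with ⟨q, hqΓ, hq1⟩ | ⟨γs, hγΓ, hγ1, hγlim⟩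
    · -- case of an element of modulus ≠ 1 : Liouville
      set L := Complex.log ((q : ℂˣ) : ℂ) with hL
      have hq0 : ((q : ℂˣ) : ℂ) ≠ 0 := q.ne_zero
      have habs : 0 < ‖((q : ℂˣ) : ℂ)‖ := norm_pos_iff.mpr hq0
      have hLre : L.re ≠ 0 := by
        rw [hL, Complex.log_re]
        intro h0
        rcases Real.log_eq_zero.mp h0 with h | h | h
        · exact absurd h habs.ne'
        · exact hq1 h
        · linarith
      have P1 : Function.Periodic h L := fun w => hper q hqΓ w
      set K := (fun p : ℝ × ℝ => (p.1 : ℂ) * L + (p.2 : ℂ) * (2 * Real.pi * Complex.I)) ''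
        (Set.Icc (0:ℝ) 1 ×ˢ Set.Icc (0:ℝ) 1) with hK
      have hKc : IsCompact K := (isCompact_Icc.prod isCompact_Icc).image
        (((Complex.continuous_ofReal.comp continuous_fst).mul continuous_const).add
          ((Complex.continuous_ofReal.comp continuous_snd).mul continuous_const))
      have hrange : Set.range h ⊆ h '' K := by
        rintro _ ⟨w, rfl⟩
        set a : ℝ := w.re / L.re with ha
        set b : ℝ := (w.im - a * L.im) / (2 * Real.pi) with hb
        have hπ : (Real.pi : ℝ) ≠ 0 := Real.pi_ne_zero
        have hw : w = (a : ℂ) * L + (b : ℂ) * (2 * Real.pi * Complex.I) := by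
          apply Complex.ext
          · simp only [Complex.add_re, Complex.mul_re, Complex.ofReal_re, Complex.ofReal_im,
              Complex.mul_im, Complex.I_re, Complex.I_im, Complex.ofReal_mul, Complex.re_ofNat,
              Complex.im_ofNat]
            simp only [zero_pow two_ne_zero, zero_mul, mul_zero, sub_zero, add_zero, zero_add]
            rw [ha, div_mul_cancel₀ _ hLre]
          · simp only [Complex.add_im, Complex.mul_im, Complex.ofReal_re, Complex.ofReal_im,
              Complex.mul_re, Complex.I_re, Complex.I_im, Complex.re_ofNat, Complex.im_ofNat]
            simp only [zero_pow two_ne_zero, zero_mul, mul_zero, sub_zero, add_zero, zero_add,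
              mul_one]
            rw [hb, div_mul_cancel₀ _ (mul_ne_zero two_ne_zero hπ)]
            ring
        set v : ℂ := ((Int.fract a : ℝ) : ℂ) * L + ((Int.fract b : ℝ) : ℂ) * (2 * Real.pi * Complex.I) with hv
        have hkey : h w = h v := by
          have hw2 : w = v + (⌊a⌋ : ℂ) * L + (⌊b⌋ : ℂ) * (2 * Real.pi * Complex.I) := by
            have hfa : (Int.fract a : ℝ) = a - ⌊a⌋ := (Int.self_sub_floor a).symm
            have hfb : (Int.fract b : ℝ) = b - ⌊b⌋ := (Int.self_sub_floor b).symm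
            rw [hw, hv, hfa, hfb]
            push_cast
            ring
          calc h w = h (v + (⌊a⌋ : ℂ) * L + (⌊b⌋ : ℂ) * (2 * Real.pi * Complex.I)) := by
                rw [← hw2]
            _ = h (v + (⌊a⌋ : ℂ) * L) := P2.int_mul ⌊b⌋ _
            _ = h v := P1.int_mul ⌊a⌋ _
        refine ⟨v, ⟨(Int.fract a, Int.fract b),
          ⟨⟨Int.fract_nonneg a, (Int.fract_lt_one a).le⟩,
            ⟨Int.fract_nonneg b, (Int.fract_lt_one b).le⟩⟩, ?_⟩, hkey.symm⟩
        simp only [hv]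
      have hbdd : Bornology.IsBounded (Set.range h) :=
        ((hKc.image hhdiff.continuous).isBounded).subset hrange
      exact fun w => hhdiff.apply_eq_apply_of_bounded hbdd w 0
    · -- case of a sequence accumulating at 1 : identity theorem
      set g : ℂ → ℂ := fun w => h w - h 0 with hg_def
      have hg : AnalyticOnNhd ℂ g Set.univ :=
        fun z _ => (hhdiff.sub_const (h 0)).analyticAt z
      have hx : ∀ n, g (Complex.log ((γs n : ℂˣ) : ℂ)) = 0 := by
        intro n
        have := hper (γs n) (hγΓ n) 0
        rw [zero_add] at this
        simp [hg_def, this]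
      have hne : ∀ n, Complex.log ((γs n : ℂˣ) : ℂ) ≠ 0 := by
        intro n hn
        have h1 : ((γs n : ℂˣ) : ℂ) = 1 := by
          have := Complex.exp_log (γs n).ne_zero
          rw [hn, Complex.exp_zero] at this
          exact this.symm
        exact hγ1 n (Units.ext h1)
      have hlim : Tendsto (fun n => Complex.log ((γs n : ℂˣ) : ℂ)) atTop (nhds 0) := by
        have hc : ContinuousAt Complex.log 1 :=
          continuousAt_clog Complex.one_mem_slitPlane
        have := hc.tendsto.comp hγlim
        simpa [Function.comp_def] using this
      have hfreq : ∃ᶠ z in nhdsWithin 0 {(0:ℂ)}ᶜ, g z = 0 := by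
        have ht : Tendsto (fun n => Complex.log ((γs n : ℂˣ) : ℂ)) atTop
            (nhdsWithin 0 {(0:ℂ)}ᶜ) :=
          tendsto_nhdsWithin_of_tendsto_nhds_of_eventually_within _ hlim
            (Eventually.of_forall hne)
        exact ht.frequently (Eventually.of_forall hx).frequently
      have hzero := hg.eqOn_zero_of_preconnected_of_frequently_eq_zero
        isPreconnected_univ (Set.mem_univ (0:ℂ)) hfreq
      intro w
      have := hzero (Set.mem_univ w)
      simpa [hg_def, sub_eq_zero] using this
  set c := h 0 with hc_def
  -- the differential equation z ψ'(z) = c ψ(z)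
  have hderiv_eq : ∀ z : ℂ, z ≠ 0 → deriv ψ z * z = c * ψ z := by
    intro z hz
    have h1 : deriv ψ z * z / ψ z = c := by
      have := hconst (Complex.log z)
      rwa [hh_def, Complex.exp_log hz] at this
    rw [div_eq_iff (hψ0 z hz)] at h1
    exact h1
  -- solve the ODE along exp
  have hODE : ∀ w : ℂ, ψ (Complex.exp w) = ψ 1 * Complex.exp (c * w) := by
    set G : ℂ → ℂ := fun w => ψ (Complex.exp w) * Complex.exp (-(c * w)) with hG_def
    have hG' : ∀ w, HasDerivAt G 0 w := by
      intro w
      have H1 : HasDerivAt (fun w => ψ (Complex.exp w))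
          (deriv ψ (Complex.exp w) * Complex.exp w) w :=
        ((hψ _ (hexp w)).hasDerivAt).comp w (Complex.hasDerivAt_exp w)
      have H2 : HasDerivAt (fun w => Complex.exp (-(c * w)))
          (-c * Complex.exp (-(c * w))) w := by
        have hin : HasDerivAt (fun w : ℂ => -(c * w)) (-c) w := by
          simpa [Pi.neg_def] using ((hasDerivAt_id w).const_mul c).neg
        simpa [mul_comm, Function.comp_def] using (Complex.hasDerivAt_exp (-(c * w))).comp w hin
      have hmul := H1.mul H2
      have e := hderiv_eq (Complex.exp w) (hexp w)
      refine hmul.congr_deriv ?_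
      rw [e]
      ring
    have hGd : Differentiable ℂ G := fun w => (hG' w).differentiableAt
    have hGc : ∀ w, G w = G 0 :=
      fun w => is_const_of_deriv_eq_zero hGd (fun x => (hG' x).deriv) w 0
    intro w
    have h0 : G 0 = ψ 1 := by simp [hG_def]
    have h1 := (hGc w).trans h0
    rw [hG_def] at h1
    have h2 := congrArg (fun t => t * Complex.exp (c * w)) h1
    simp only [mul_assoc, ← Complex.exp_add, neg_add_cancel, Complex.exp_zero, mul_one] at h2
    exact h2
  have hψ1 : ψ 1 ≠ 0 := hψ0 1 one_ne_zero
  -- c is an integer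
  obtain ⟨n, hn⟩ : ∃ n : ℤ, c = n := by
    have h2 := hODE (2 * Real.pi * Complex.I)
    rw [Complex.exp_two_pi_mul_I] at h2
    have hE : Complex.exp (c * (2 * Real.pi * Complex.I)) = 1 :=
      mul_left_cancel₀ hψ1 (h2.symm.trans (mul_one (ψ 1)).symm)
    rcases Complex.exp_eq_one_iff.mp hE with ⟨m, hm⟩
    have h2π : (2 * Real.pi * Complex.I : ℂ) ≠ 0 := by
      simp [Real.pi_ne_zero, Complex.I_ne_zero]
    exact ⟨m, mul_right_cancel₀ h2π hm⟩
  have hmono : ∀ z : ℂ, z ≠ 0 → ψ z = ψ 1 * z ^ n := by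
    intro z hz
    have h1 := hODE (Complex.log z)
    rw [Complex.exp_log hz, hn] at h1
    rw [h1]
    congr 1
    rw [Complex.exp_int_mul, Complex.exp_log hz]
  refine ⟨ψ 1, hψ1, n, hmono, ?_⟩
  intro γ
  have h1 := heq γ 1 one_ne_zero
  rw [mul_one] at h1
  have h2 := hmono (((γ : ℂˣ) : ℂ)) (γ : ℂˣ).ne_zero
  rw [h2, mul_comm (((σ γ : Γ) : ℂˣ) : ℂ) (ψ 1)] at h1
  have hval : (((σ γ : Γ) : ℂˣ) : ℂ) = ((γ : ℂˣ) : ℂ) ^ n :=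
    (mul_left_cancel₀ hψ1 h1).symm
  exact Units.ext (hval.trans (Units.val_zpow_eq_zpow_val _ _).symm)
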